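/- With the notation of the previous setup, let T, T⁽¹⁾, T⁽²⁾ be the L-divergences of (π, Φ), (π⁽¹⁾, Φ⁽¹⁾), (π⁽²⁾, Φ⁽²⁾) respectively, where π = λπ⁽¹⁾ + (1−λ)π⁽²⁾ and Φ = (Φ⁽¹⁾)^λ(Φ⁽²⁾)^{1−λ}. Then T(q|p) ≥ λT⁽¹⁾(q|p) + (1−λ)T⁽²⁾(q|p) for all p, q ∈ Δ. -/
import Mathlib


theorem stmt_7 (n : ℕ) (hn : 2 ≤ n)
    (Δ : Set (Fin n → ℝ))
    (hΔ : Δ = {p | (∀ i, 0 < p i) ∧ ∑ i, p i = 1})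
    (Φ₁ Φ₂ : (Fin n → ℝ) → ℝ)
    (hconc₁ : ConcaveOn ℝ Δ Φ₁) (hconc₂ : ConcaveOn ℝ Δ Φ₂)
    (hpos₁ : ∀ p ∈ Δ, 0 < Φ₁ p) (hpos₂ : ∀ p ∈ Δ, 0 < Φ₂ p)
    (π₁ π₂ : (Fin n → ℝ) → (Fin n → ℝ))
    (hmem₁ : ∀ p ∈ Δ, π₁ p ∈ closure Δ) (hmem₂ : ∀ p ∈ Δ, π₂ p ∈ closure Δ)
    (hgen₁ : ∀ p ∈ Δ, ∀ q ∈ Δ,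
      1 + ∑ i, (π₁ p i / p i) * (q i - p i) ≥ Φ₁ q / Φ₁ p)
    (hgen₂ : ∀ p ∈ Δ, ∀ q ∈ Δ,
      1 + ∑ i, (π₂ p i / p i) * (q i - p i) ≥ Φ₂ q / Φ₂ p)
    (lam : ℝ) (hlam : lam ∈ Set.Icc (0 : ℝ) 1)
    (π : (Fin n → ℝ) → (Fin n → ℝ))
    (hπ : ∀ p, π p = fun i => lam * π₁ p i + (1 - lam) * π₂ p i)
    (Φ : (Fin n → ℝ) → ℝ)
    (hΦ : ∀ p, Φ p = Φ₁ p ^ lam * Φ₂ p ^ (1 - lam))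
    (T T₁ T₂ : (Fin n → ℝ) → (Fin n → ℝ) → ℝ)
    (hT : ∀ p q, T q p = Real.log (1 + ∑ i, (π p i / p i) * (q i - p i))
            - Real.log (Φ q / Φ p))
    (hT₁ : ∀ p q, T₁ q p = Real.log (1 + ∑ i, (π₁ p i / p i) * (q i - p i))
            - Real.log (Φ₁ q / Φ₁ p))
    (hT₂ : ∀ p q, T₂ q p = Real.log (1 + ∑ i, (π₂ p i / p i) * (q i - p i))
            - Real.log (Φ₂ q / Φ₂ p)) :
    ∀ p ∈ Δ, ∀ q ∈ Δ, T q p ≥ lam * T₁ q p + (1 - lam) * T₂ q p := by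
  obtain ⟨hl0, hl1⟩ := hlam
  intro p hp q hq
  set S₁ := ∑ i, (π₁ p i / p i) * (q i - p i) with hS₁
  set S₂ := ∑ i, (π₂ p i / p i) * (q i - p i) with hS₂
  have h1 : (0:ℝ) < 1 + S₁ :=
    lt_of_lt_of_le (div_pos (hpos₁ q hq) (hpos₁ p hp)) (hgen₁ p hp q hq)
  have h2 : (0:ℝ) < 1 + S₂ :=
    lt_of_lt_of_le (div_pos (hpos₂ q hq) (hpos₂ p hp)) (hgen₂ p hp q hq)
  have hsum : 1 + ∑ i, (π p i / p i) * (q i - p i)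
      = lam * (1 + S₁) + (1 - lam) * (1 + S₂) := by
    have : ∀ i : Fin n, (π p i / p i) * (q i - p i)
        = lam * ((π₁ p i / p i) * (q i - p i))
          + (1 - lam) * ((π₂ p i / p i) * (q i - p i)) := by
      intro i
      simp only [hπ p]
      ring
    rw [Finset.sum_congr rfl (fun i _ => this i), Finset.sum_add_distrib,
      ← Finset.mul_sum, ← Finset.mul_sum, ← hS₁, ← hS₂]
    ring
  have hlog : Real.log (1 + ∑ i, (π p i / p i) * (q i - p i))
      ≥ lam * Real.log (1 + S₁) + (1 - lam) * Real.log (1 + S₂) := by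
    rw [hsum]
    have := strictConcaveOn_log_Ioi.concaveOn.2 (Set.mem_Ioi.mpr h1)
      (Set.mem_Ioi.mpr h2) hl0 (sub_nonneg.mpr hl1) (by ring)
    simpa [smul_eq_mul] using this
  have hΦeq : Real.log (Φ q / Φ p)
      = lam * Real.log (Φ₁ q / Φ₁ p) + (1 - lam) * Real.log (Φ₂ q / Φ₂ p) := by
    have p1 := hpos₁ p hp; have p2 := hpos₂ p hp
    have q1 := hpos₁ q hq; have q2 := hpos₂ q hq
    rw [hΦ q, hΦ p,
      Real.log_div (by positivity) (by positivity),
      Real.log_mul (by positivity) (by positivity),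
      Real.log_mul (by positivity) (by positivity),
      Real.log_rpow q1, Real.log_rpow q2, Real.log_rpow p1, Real.log_rpow p2,
      Real.log_div (ne_of_gt q1) (ne_of_gt p1),
      Real.log_div (ne_of_gt q2) (ne_of_gt p2)]
    ring
  rw [hT p q, hT₁ p q, hT₂ p q, hΦeq]
  nlinarith [hlog]
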